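/- Let G be a finite group of order n, N ⊴ G a normal subgroup, and I a (two-sided) ideal of the group algebra F_q[G] on which N acts trivially from the left (n·x = x for all n ∈ N, x ∈ I). Let H be any finite group of order n with a normal subgroup K ⊴ H such that G/N ≅ H/K. Then there is a bijection φ : G → H whose F_q-linear extension maps I onto a two-sided ideal of F_q[H]. -/

import Mathlib

/-- Fiber of the quotient map over a coset is equivalent to the subgroup. -/
noncomputable def cosetFiberEquiv {G : Type*} [Group G] (N : Subgroup G) (q : G ⧸ N) :
    {g : G // (QuotientGroup.mk g : G ⧸ N) = q} ≃ N where
  toFun p := ⟨q.out⁻¹ * p.1, by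
    rw [← QuotientGroup.eq, QuotientGroup.out_eq', p.2]⟩
  invFun n := ⟨q.out * n.1, by rw [QuotientGroup.mk_mul_of_mem _ n.2, QuotientGroup.out_eq']⟩
  left_inv p := by ext; simp
  right_inv n := by ext; simp

/-- Let `G` be a finite group of order `n`, `N ⊴ G`, and `I` a two-sided
ideal of `F[G]` on which `N` acts trivially from the left. If `H` is a finite group of
order `n` with `K ⊴ H` and `G/N ≅ H/K`, then there is a bijection `φ : G → H` whose
`F`-linear extension maps `I` onto a two-sided ideal of `F[H]`. -/
theorem ideal_permutation_equivalent_of_isomorphic_quotients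
    {F : Type*} [Field F] [Fintype F]
    {G H : Type*} [Group G] [Fintype G] [Group H] [Fintype H]
    {n : ℕ} (hG : Nat.card G = n) (hH : Nat.card H = n)
    (N : Subgroup G) [N.Normal] (K : Subgroup H) [K.Normal]
    (iso : (G ⧸ N) ≃* (H ⧸ K))
    (I : Submodule F (MonoidAlgebra F G))
    (hIl : ∀ a : MonoidAlgebra F G, ∀ x ∈ I, a * x ∈ I)
    (hIr : ∀ a : MonoidAlgebra F G, ∀ x ∈ I, x * a ∈ I)
    (htriv : ∀ m ∈ N, ∀ x ∈ I, MonoidAlgebra.of F G m * x = x) :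
    ∃ φ : G ≃ H, ∃ J : Submodule F (MonoidAlgebra F H),
      (∀ a : MonoidAlgebra F H, ∀ y ∈ J, a * y ∈ J) ∧
      (∀ a : MonoidAlgebra F H, ∀ y ∈ J, y * a ∈ J) ∧
      (MonoidAlgebra.mapDomainAddEquiv F φ '' (I : Set (MonoidAlgebra F G)) =
        (J : Set (MonoidAlgebra F H))) := by
  classical
  -- cardinalities of N and K agree
  have hq : Nat.card (G ⧸ N) = Nat.card (H ⧸ K) := Nat.card_congr iso.toEquiv
  have hNK : Nat.card N = Nat.card K := by
    have h1 : Nat.card (G ⧸ N) * Nat.card N = Nat.card (H ⧸ K) * Nat.card K := by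
      rw [← Subgroup.card_eq_card_quotient_mul_card_subgroup,
        ← Subgroup.card_eq_card_quotient_mul_card_subgroup, hG, hH]
    rw [hq] at h1
    exact Nat.eq_of_mul_eq_mul_left Nat.card_pos h1
  have : Fintype N := Fintype.ofFinite N
  have : Fintype K := Fintype.ofFinite K
  have eNK : N ≃ K := Fintype.equivOfCardEq (by
    rw [← Nat.card_eq_fintype_card, ← Nat.card_eq_fintype_card]; exact hNK)
  -- build the bijection φ : G ≃ H, compatible with the quotients
  let fib : ∀ q : G ⧸ N,
      {g : G // (QuotientGroup.mk g : G ⧸ N) = q} ≃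
      {h : H // (QuotientGroup.mk h : H ⧸ K) = iso q} :=
    fun q => ((cosetFiberEquiv N q).trans eNK).trans (cosetFiberEquiv K (iso q)).symm
  let φ : G ≃ H :=
    ((Equiv.sigmaFiberEquiv (QuotientGroup.mk : G → G ⧸ N)).symm.trans
      (Equiv.sigmaCongr iso.toEquiv fib)).trans
      (Equiv.sigmaFiberEquiv (QuotientGroup.mk : H → H ⧸ K))
  have hφ : ∀ g : G, (QuotientGroup.mk (φ g) : H ⧸ K) = iso (QuotientGroup.mk g) :=
    fun g => (fib (QuotientGroup.mk g) ⟨g, rfl⟩).2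
  have hφs : ∀ h : H, iso (QuotientGroup.mk (φ.symm h)) = (QuotientGroup.mk h : H ⧸ K) := by
    intro h
    have := hφ (φ.symm h)
    rw [Equiv.apply_symm_apply] at this
    exact this.symm
  -- elements of I are constant on cosets of N
  have hconst : ∀ x ∈ I, ∀ g g' : G,
      (QuotientGroup.mk g : G ⧸ N) = QuotientGroup.mk g' → x.coeff g = x.coeff g' := by
    intro x hx g g' hgg
    have hmem : g' * g⁻¹ ∈ N := by
      have h1 : g⁻¹ * g' ∈ N := QuotientGroup.eq.mp hgg
      have := (‹N.Normal›).conj_mem _ h1 g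
      simpa [mul_assoc] using this
    have := htriv _ hmem x hx
    have h2 : (MonoidAlgebra.of F G (g' * g⁻¹) * x).coeff g' = x.coeff g' := by rw [this]
    rw [MonoidAlgebra.of_apply, MonoidAlgebra.coeff_single_mul_apply, one_mul] at h2
    simpa [mul_assoc] using h2
  -- the image submodule
  let Φ : MonoidAlgebra F G ≃ₗ[F] MonoidAlgebra F H := MonoidAlgebra.mapDomainLinearEquiv F F φ
  have hΦ : ∀ x : MonoidAlgebra F G, Φ x = MonoidAlgebra.mapDomainAddEquiv F φ x := fun x => by
    ext; simp [Φ]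
  let J : Submodule F (MonoidAlgebra F H) := I.map (Φ : MonoidAlgebra F G →ₗ[F] _)
  -- key multiplication identities
  have keyL : ∀ x ∈ I, ∀ h : H,
      MonoidAlgebra.of F H h * Φ x = Φ (MonoidAlgebra.of F G (φ.symm h) * x) := by
    intro x hx h
    ext h'
    rw [MonoidAlgebra.of_apply, MonoidAlgebra.coeff_single_mul_apply, one_mul]
    show ((MonoidAlgebra.mapDomainLinearEquiv F F φ) x).coeff (h⁻¹ * h') =
      ((MonoidAlgebra.mapDomainLinearEquiv F F φ) _).coeff h'
    rw [MonoidAlgebra.coeff_mapDomainLinearEquiv, MonoidAlgebra.coeff_mapDomainLinearEquiv,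
      Finsupp.equivMapDomain_apply, Finsupp.equivMapDomain_apply]
    rw [MonoidAlgebra.of_apply, MonoidAlgebra.coeff_single_mul_apply, one_mul]
    apply hconst x hx
    apply iso.injective
    simp only [QuotientGroup.mk_mul, QuotientGroup.mk_inv, map_mul, map_inv, hφs]
  have keyR : ∀ x ∈ I, ∀ h : H,
      Φ x * MonoidAlgebra.of F H h = Φ (x * MonoidAlgebra.of F G (φ.symm h)) := by
    intro x hx h
    ext h'
    rw [MonoidAlgebra.of_apply, MonoidAlgebra.coeff_mul_single_apply, mul_one]
    show ((MonoidAlgebra.mapDomainLinearEquiv F F φ) x).coeff (h' * h⁻¹) =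
      ((MonoidAlgebra.mapDomainLinearEquiv F F φ) _).coeff h'
    rw [MonoidAlgebra.coeff_mapDomainLinearEquiv, MonoidAlgebra.coeff_mapDomainLinearEquiv,
      Finsupp.equivMapDomain_apply, Finsupp.equivMapDomain_apply]
    rw [MonoidAlgebra.of_apply, MonoidAlgebra.coeff_mul_single_apply, mul_one]
    apply hconst x hx
    apply iso.injective
    simp only [QuotientGroup.mk_mul, QuotientGroup.mk_inv, map_mul, map_inv, hφs]
  refine ⟨φ, J, ?_, ?_, ?_⟩
  · intro a y hy
    induction a using MonoidAlgebra.induction_on with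
    | of h =>
      obtain ⟨x, hx, rfl⟩ := hy
      exact ⟨_, hIl (MonoidAlgebra.of F G (φ.symm h)) x hx, (keyL x hx h).symm⟩
    | add a b ha hb => rw [add_mul]; exact J.add_mem ha hb
    | smul r a ha => rw [smul_mul_assoc]; exact J.smul_mem r ha
  · intro a y hy
    induction a using MonoidAlgebra.induction_on with
    | of h =>
      obtain ⟨x, hx, rfl⟩ := hy
      exact ⟨_, hIr (MonoidAlgebra.of F G (φ.symm h)) x hx, (keyR x hx h).symm⟩
    | add a b ha hb => rw [mul_add]; exact J.add_mem ha hb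
    | smul r a ha => rw [mul_smul_comm]; exact J.smul_mem r ha
  · ext y
    simp only [Set.mem_image, SetLike.mem_coe, Submodule.mem_map, J]
    constructor
    · rintro ⟨x, hx, rfl⟩; exact ⟨x, hx, hΦ x⟩
    · rintro ⟨x, hx, rfl⟩; exact ⟨x, hx, (hΦ x).symm⟩
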